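/- Let S ∈ Mat(2n,ℝ) be a Hamiltonian matrix which is hyperbolic. Then V^+(S) = {v ∈ ℝ^{2n} : exp(tS)v → 0 as t → −∞} is a Lagrangian subspace of (ℝ^{2n}, ω), and ℝ^{2n} decomposes as the direct sum ℝ^{2n} = V^−(S) ⊕ V^+(S): the two subspaces intersect trivially and together span ℝ^{2n}. -/

import Mathlib

open Matrix Filter Topology

/-- The standard complex structure `J = [[0, -Iₙ],[Iₙ, 0]]` on `ℝ^{2n}`. -/
noncomputable def Jmat (n : ℕ) : Matrix (Fin (2*n)) (Fin (2*n)) ℝ :=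
  Matrix.reindex (finSumFinEquiv.trans (finCongr (two_mul n).symm))
    (finSumFinEquiv.trans (finCongr (two_mul n).symm))
    (Matrix.fromBlocks 0 (-1) 1 0)

/-- The standard symplectic form `ω(u,v) = ⟨Ju, v⟩` on `ℝ^{2n}`. -/
noncomputable def symplForm (n : ℕ) (u v : Fin (2*n) → ℝ) : ℝ :=
  (Jmat n) *ᵥ u ⬝ᵥ v

/-- A real matrix is hyperbolic if no eigenvalue of its complexification is purely imaginary. -/
def IsHyperbolic {d : ℕ} (T : Matrix (Fin d) (Fin d) ℝ) : Prop :=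
  ∀ μ : ℂ, Module.End.HasEigenvalue (Matrix.toLin' (T.map Complex.ofReal)) μ → μ.re ≠ 0

/-- `V⁻(T)`: vectors whose trajectory under `exp(tT)` tends to `0` as `t → +∞`. -/
def negSpace (d : ℕ) (T : Matrix (Fin d) (Fin d) ℝ) : Submodule ℝ (Fin d → ℝ) where
  carrier := {v | Tendsto (fun t : ℝ => NormedSpace.exp (t • T) *ᵥ v) atTop (nhds 0)}
  add_mem' := by
    intro a b ha hb
    simpa [Matrix.mulVec_add] using ha.add hb
  zero_mem' := by
    simpa [Matrix.mulVec_zero] using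
      (tendsto_const_nhds : Tendsto (fun _ : ℝ => (0 : Fin d → ℝ)) atTop (nhds 0))
  smul_mem' := by
    intro c a ha
    simpa [Matrix.mulVec_smul] using ha.const_smul c

/-- `V⁺(T)`: vectors whose trajectory under `exp(tT)` tends to `0` as `t → -∞`. -/
def posSpace (d : ℕ) (T : Matrix (Fin d) (Fin d) ℝ) : Submodule ℝ (Fin d → ℝ) where
  carrier := {v | Tendsto (fun t : ℝ => NormedSpace.exp (t • T) *ᵥ v) atBot (nhds 0)}
  add_mem' := by
    intro a b ha hb
    simpa [Matrix.mulVec_add] using ha.add hb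
  zero_mem' := by
    simpa [Matrix.mulVec_zero] using
      (tendsto_const_nhds : Tendsto (fun _ : ℝ => (0 : Fin d → ℝ)) atBot (nhds 0))
  smul_mem' := by
    intro c a ha
    simpa [Matrix.mulVec_smul] using ha.const_smul c

open NormedSpace

attribute [local instance] Matrix.linftyOpNormedRing Matrix.linftyOpNormedAlgebra

variable {d : ℕ}

/-- scalar exp -/
lemma exp_smul_one (c : ℂ) :
    exp (c • (1 : Matrix (Fin d) (Fin d) ℂ)) = Complex.exp c • 1 := by
  have h := map_exp (algebraMap ℂ (Matrix (Fin d) (Fin d) ℂ))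
    (continuous_algebraMap _ _) c
  rw [Algebra.algebraMap_eq_smul_one, Algebra.algebraMap_eq_smul_one] at h
  rw [Complex.exp_eq_exp_ℂ]
  exact h.symm

lemma exp_mulVec_eq (M : Matrix (Fin d) (Fin d) ℂ) (μ : ℂ) (k : ℕ) (w : Fin d → ℂ)
    (hw : ((M - μ • 1) ^ k) *ᵥ w = 0) (t : ℂ) :
    exp (t • M) *ᵥ w
      = ∑ j ∈ Finset.range k,
          (Complex.exp (t * μ) * t ^ j * (Nat.factorial j : ℂ)⁻¹) • ((M - μ • 1) ^ j *ᵥ w) := by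
  set N := M - μ • 1 with hN
  have hsplit : t • M = (t * μ) • (1 : Matrix (Fin d) (Fin d) ℂ) + t • N := by
    rw [hN, smul_sub, smul_smul]; abel
  have hcomm : Commute ((t * μ) • (1 : Matrix (Fin d) (Fin d) ℂ)) (t • N) := by
    refine (Commute.one_left _).smul_left _ |>.smul_right _
  rw [hsplit, Matrix.exp_add_of_commute _ _ hcomm, exp_smul_one]
  -- now mulVec
  have hnil : ∀ m : ℕ, k ≤ m → N ^ m *ᵥ w = 0 := by
    intro m hm
    have : N ^ m = N ^ (m - k) * N ^ k := by rw [← pow_add]; congr 1; omega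
    rw [this, ← Matrix.mulVec_mulVec, hw, Matrix.mulVec_zero]
  have hL : exp (t • N) *ᵥ w = ∑' j : ℕ, ((t ^ j * (Nat.factorial j : ℂ)⁻¹)) • (N ^ j *ᵥ w) := by
    have hsum : Summable fun j : ℕ => (Nat.factorial j : ℂ)⁻¹ • (t • N) ^ j :=
      expSeries_summable' (𝕂 := ℂ) (t • N)
    let L : Matrix (Fin d) (Fin d) ℂ →ₗ[ℂ] (Fin d → ℂ) :=
      { toFun := fun X => X *ᵥ w
        map_add' := fun X Y => Matrix.add_mulVec X Y w
        map_smul' := fun c X => Matrix.smul_mulVec c X w }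
    have hLcont : Continuous L := LinearMap.continuous_of_finiteDimensional L
    have := (ContinuousLinearMap.map_tsum ⟨L, hLcont⟩ hsum :
      (⟨L, hLcont⟩ : _ →L[ℂ] _) (∑' j : ℕ, (Nat.factorial j : ℂ)⁻¹ • (t • N) ^ j)
        = ∑' j : ℕ, (⟨L, hLcont⟩ : _ →L[ℂ] _) ((Nat.factorial j : ℂ)⁻¹ • (t • N) ^ j))
    rw [exp_eq_tsum ℂ]
    refine this.trans (tsum_congr fun j => ?_)
    show ((Nat.factorial j : ℂ)⁻¹ • (t • N) ^ j) *ᵥ w = _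
    rw [smul_pow, smul_smul, Matrix.smul_mulVec, mul_comm]
  have h1 : (Complex.exp (t * μ) • (1 : Matrix (Fin d) (Fin d) ℂ) * exp (t • N)) *ᵥ w
      = Complex.exp (t * μ) • (exp (t • N) *ᵥ w) := by
    rw [smul_mul_assoc, one_mul, Matrix.smul_mulVec]
  have h2 : (∑' j : ℕ, ((t ^ j * (Nat.factorial j : ℂ)⁻¹)) • (N ^ j *ᵥ w))
      = ∑ j ∈ Finset.range k, ((t ^ j * (Nat.factorial j : ℂ)⁻¹)) • (N ^ j *ᵥ w) := by
    refine tsum_eq_sum fun j hj => ?_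
    rw [hnil j (by simpa using hj), smul_zero]
  rw [h1, hL, h2, Finset.smul_sum]
  exact Finset.sum_congr rfl fun j _ => by rw [smul_smul, ← mul_assoc]

lemma real_decay (c : ℝ) (hc : 0 < c) (j : ℕ) :
    Tendsto (fun t : ℝ => Real.exp (-(c * t)) * t ^ j) atTop (𝓝 0) := by
  have h1 : Tendsto (fun x : ℝ => x ^ j * Real.exp (-x)) atTop (𝓝 0) :=
    Real.tendsto_pow_mul_exp_neg_atTop_nhds_zero j
  have h2 : Tendsto (fun t : ℝ => c * t) atTop atTop :=
    Tendsto.const_mul_atTop hc tendsto_id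
  have h3 := (h1.comp h2).const_mul ((c ^ j)⁻¹)
  rw [mul_zero] at h3
  refine h3.congr fun t => ?_
  have hcj : (c : ℝ) ^ j ≠ 0 := pow_ne_zero _ hc.ne'
  show (c ^ j)⁻¹ * ((c * t) ^ j * Real.exp (-(c * t))) = _
  rw [mul_pow, ← mul_assoc, ← mul_assoc, inv_mul_cancel₀ hcj, one_mul, mul_comm]

lemma coeff_decay (μ : ℂ) (hμ : μ.re < 0) (j : ℕ) :
    Tendsto (fun t : ℝ => Complex.exp ((t : ℂ) * μ) * (t : ℂ) ^ j * (Nat.factorial j : ℂ)⁻¹)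
      atTop (𝓝 (0 : ℂ)) := by
  rw [tendsto_zero_iff_norm_tendsto_zero]
  have key := (real_decay (-μ.re) (by linarith) j).mul_const ((Nat.factorial j : ℝ)⁻¹)
  rw [zero_mul] at key
  refine squeeze_zero' (Eventually.of_forall fun t => norm_nonneg _) ?_ key
  filter_upwards [eventually_ge_atTop (0 : ℝ)] with t ht
  have hre : ((t : ℂ) * μ).re = t * μ.re := by simp
  rw [norm_mul, norm_mul, norm_pow, Complex.norm_exp, hre, Complex.norm_real, Real.norm_eq_abs,
    abs_of_nonneg ht, norm_inv]
  have : ‖(Nat.factorial j : ℂ)‖ = (Nat.factorial j : ℝ) := by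
    simp
  rw [this]
  have : -(-μ.re * t) = t * μ.re := by ring
  rw [this]

lemma toLin'_sub_smul_pow (M : Matrix (Fin d) (Fin d) ℂ) (μ : ℂ) (k : ℕ) (x : Fin d → ℂ) :
    ((Matrix.toLin' M - μ • 1) ^ k) x = ((M - μ • 1) ^ k) *ᵥ x := by
  have h : Matrix.toLin' M - μ • (1 : Module.End ℂ (Fin d → ℂ))
      = Matrix.toLinAlgEquiv' (M - μ • 1) := by
    rw [map_sub, _root_.map_smul, _root_.map_one]
    rfl
  rw [h, ← map_pow]
  rfl

noncomputable def genSp (M : Matrix (Fin d) (Fin d) ℂ) (μ : ℂ) : Submodule ℂ (Fin d → ℂ) :=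
  Module.End.maxGenEigenspace (Matrix.toLin' M) μ

lemma mem_genSp {M : Matrix (Fin d) (Fin d) ℂ} {μ : ℂ} {x : Fin d → ℂ} :
    x ∈ genSp M μ ↔ ∃ k : ℕ, ((M - μ • 1) ^ k) *ᵥ x = 0 := by
  unfold genSp
  rw [Module.End.mem_maxGenEigenspace]
  exact exists_congr fun k => by rw [toLin'_sub_smul_pow]

lemma genSp_neg {M : Matrix (Fin d) (Fin d) ℂ} {μ : ℂ} : genSp (-M) (-μ) = genSp M μ := by
  ext x
  rw [mem_genSp, mem_genSp]
  refine exists_congr fun k => ?_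
  have h : (-M - (-μ) • 1) = (-1 : ℂ) • (M - μ • 1) := by
    rw [neg_smul, smul_sub]; ext i j; simp
  rw [h, smul_pow, Matrix.smul_mulVec, smul_eq_zero]
  simp [pow_ne_zero]

lemma genSp_decay (M : Matrix (Fin d) (Fin d) ℂ) (μ : ℂ) (hμ : μ.re < 0) {w : Fin d → ℂ}
    (hw : w ∈ genSp M μ) :
    Tendsto (fun t : ℝ => exp (t • M) *ᵥ w) atTop (𝓝 0) := by
  obtain ⟨k, hk⟩ := mem_genSp.mp hw
  have hrw : ∀ t : ℝ, exp (t • M) *ᵥ w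
      = ∑ j ∈ Finset.range k,
          (Complex.exp ((t : ℂ) * μ) * (t : ℂ) ^ j * (Nat.factorial j : ℂ)⁻¹) •
            ((M - μ • 1) ^ j *ᵥ w) := by
    intro t
    have hts : (t : ℝ) • M = ((t : ℂ)) • M := by
      ext i j; simp [Complex.real_smul]
    rw [hts, exp_mulVec_eq M μ k w hk]
  have h := tendsto_finset_sum (Finset.range k)
    (fun j (_ : j ∈ Finset.range k) =>
      ((coeff_decay μ hμ j).smul_const (((M - μ • 1) ^ j) *ᵥ w)))
  simp only [zero_smul, Finset.sum_const_zero] at h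
  exact (tendsto_congr hrw).mpr h

lemma genSp_exp_mem (M : Matrix (Fin d) (Fin d) ℂ) (μ : ℂ) (t : ℝ) {x : Fin d → ℂ}
    (hx : x ∈ genSp M μ) : exp (t • M) *ᵥ x ∈ genSp M μ := by
  have hc0 : Commute M (exp (t • M)) := ((Commute.refl M).smul_right t).exp_right
  have hc : Commute (Matrix.toLin' M) (Matrix.toLin' (exp (t • M))) := by
    have := hc0.map (Matrix.toLinAlgEquiv' : Matrix (Fin d) (Fin d) ℂ ≃ₐ[ℂ] _)
    exact this
  have h2 := Module.End.mapsTo_maxGenEigenspace_of_comm hc μ hx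
  rw [Matrix.toLin'_apply] at h2
  exact h2

noncomputable def Eneg (M : Matrix (Fin d) (Fin d) ℂ) : Submodule ℂ (Fin d → ℂ) :=
  ⨆ μ : {μ : ℂ // μ.re < 0}, genSp M μ.1

lemma Eneg_decay {M : Matrix (Fin d) (Fin d) ℂ} {x : Fin d → ℂ} (hx : x ∈ Eneg M) :
    Tendsto (fun t : ℝ => exp (t • M) *ᵥ x) atTop (𝓝 0) := by
  refine Submodule.iSup_induction (motive := fun x =>
      Tendsto (fun t : ℝ => exp (t • M) *ᵥ x) atTop (𝓝 0)) _ hx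
    (fun μ y hy => genSp_decay M μ.1 μ.2 hy) ?_ ?_
  · simpa [Matrix.mulVec_zero] using
      (tendsto_const_nhds : Tendsto (fun _ : ℝ => (0 : Fin d → ℂ)) atTop (𝓝 0))
  · intro a b ha hb
    simpa [Matrix.mulVec_add] using ha.add hb

lemma Eneg_exp_mem {M : Matrix (Fin d) (Fin d) ℂ} (t : ℝ) {x : Fin d → ℂ} (hx : x ∈ Eneg M) :
    exp (t • M) *ᵥ x ∈ Eneg M := by
  refine Submodule.iSup_induction (motive := fun x => exp (t • M) *ᵥ x ∈ Eneg M) _ hx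
    (fun μ y hy => ?_) ?_ ?_
  · exact Submodule.mem_iSup_of_mem μ (genSp_exp_mem M μ.1 t hy)
  · simp [Matrix.mulVec_zero]
  · intro a b ha hb
    rw [Matrix.mulVec_add]
    exact add_mem ha hb

lemma rigidity {M : Matrix (Fin d) (Fin d) ℂ} {E : Submodule ℂ (Fin d → ℂ)}
    (hinv : ∀ t : ℝ, ∀ x ∈ E, exp (t • M) *ᵥ x ∈ E)
    (hdec : ∀ x ∈ E, Tendsto (fun t : ℝ => exp (t • M) *ᵥ x) atBot (𝓝 0))
    {w : Fin d → ℂ} (hw : w ∈ E)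
    (hto : Tendsto (fun t : ℝ => exp (t • M) *ᵥ w) atTop (𝓝 0)) : w = 0 := by
  classical
  set u : ℝ → E := fun t => ⟨exp (t • M) *ᵥ w, hinv t w hw⟩ with hu
  have huten : Tendsto u atTop (𝓝 0) := by
    rw [tendsto_subtype_rng]
    exact hto
  let b := Module.finBasis ℂ E
  have hexpinv : ∀ t : ℝ, ∀ y : Fin d → ℂ, exp ((-t) • M) *ᵥ (exp (t • M) *ᵥ y) = y := by
    intro t y
    rw [Matrix.mulVec_mulVec, ← Matrix.exp_add_of_commute]
    · rw [show (-t) • M + t • M = 0 by rw [neg_smul]; abel, exp_zero, Matrix.one_mulVec]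
    · exact ((Commute.refl M).smul_left (-t)).smul_right t
  have hkey : ∀ t : ℝ, w = ∑ i, (b.coord i (u t)) • (exp ((-t) • M) *ᵥ (b i : Fin d → ℂ)) := by
    intro t
    have h1 : ((u t : Fin d → ℂ)) = ∑ i, (b.coord i (u t)) • (b i : Fin d → ℂ) := by
      have := congrArg (Subtype.val) (b.sum_repr (u t)).symm
      exact this.trans (by rw [Submodule.coe_sum]; rfl)
    calc w = exp ((-t) • M) *ᵥ (u t : Fin d → ℂ) := (hexpinv t w).symm
      _ = exp ((-t) • M) *ᵥ (∑ i, (b.coord i (u t)) • (b i : Fin d → ℂ)) := by rw [← h1]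
      _ = ∑ i, (b.coord i (u t)) • (exp ((-t) • M) *ᵥ (b i : Fin d → ℂ)) := by
          rw [show ∀ (A : Matrix (Fin d) (Fin d) ℂ) (f : _ → _),
            A *ᵥ (∑ i, f i) = ∑ i, A *ᵥ f i from fun A f => map_sum (Matrix.mulVecLin A) f _]
          · exact Finset.sum_congr rfl fun i _ => by rw [Matrix.mulVec_smul]
  have hF : Tendsto (fun t : ℝ => ∑ i, (b.coord i (u t)) •
      (exp ((-t) • M) *ᵥ (b i : Fin d → ℂ))) atTop (𝓝 0) := by
    have hterm : ∀ i, Tendsto (fun t : ℝ => (b.coord i (u t)) •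
        (exp ((-t) • M) *ᵥ (b i : Fin d → ℂ))) atTop (𝓝 (0 : Fin d → ℂ)) := by
      intro i
      have hc : Tendsto (fun t : ℝ => b.coord i (u t)) atTop (𝓝 0) := by
        have hcont : Continuous (b.coord i) := LinearMap.continuous_of_finiteDimensional _
        have := (hcont.tendsto 0).comp huten
        rw [map_zero] at this
        exact this
      have hv : Tendsto (fun t : ℝ => exp ((-t) • M) *ᵥ (b i : Fin d → ℂ)) atTop (𝓝 0) := by
        exact (hdec (b i) (b i).2).comp tendsto_neg_atTop_atBot
      simpa using hc.smul hv
    have h := tendsto_finset_sum (Finset.univ) (fun i (_ : i ∈ Finset.univ) => hterm i)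
    simpa using h
  have : Tendsto (fun _ : ℝ => w) atTop (𝓝 0) := by
    rw [tendsto_congr hkey]
    exact hF
  exact tendsto_nhds_unique this tendsto_const_nhds |>.symm ▸ rfl

noncomputable def Epos (M : Matrix (Fin d) (Fin d) ℂ) : Submodule ℂ (Fin d → ℂ) :=
  Eneg (-M)

lemma neg_smul_neg' (t : ℝ) (M : Matrix (Fin d) (Fin d) ℂ) : (-t) • (-M) = t • M := by
  rw [smul_neg, neg_smul, neg_neg]

lemma smul_neg' (t : ℝ) (M : Matrix (Fin d) (Fin d) ℂ) : t • (-M) = (-t) • M := by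
  rw [smul_neg, neg_smul]

lemma Epos_decay {M : Matrix (Fin d) (Fin d) ℂ} {x : Fin d → ℂ} (hx : x ∈ Epos M) :
    Tendsto (fun t : ℝ => exp (t • M) *ᵥ x) atBot (𝓝 0) := by
  have h := (Eneg_decay hx).comp tendsto_neg_atBot_atTop
  refine h.congr fun t => ?_
  show exp ((-t) • (-M)) *ᵥ x = _
  rw [neg_smul_neg']

lemma Epos_exp_mem {M : Matrix (Fin d) (Fin d) ℂ} (t : ℝ) {x : Fin d → ℂ} (hx : x ∈ Epos M) :
    exp (t • M) *ᵥ x ∈ Epos M := by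
  have h := Eneg_exp_mem (M := -M) (-t) hx
  rwa [neg_smul_neg'] at h

lemma Epos_rigidity {M : Matrix (Fin d) (Fin d) ℂ} {x : Fin d → ℂ} (hx : x ∈ Epos M)
    (hto : Tendsto (fun t : ℝ => exp (t • M) *ᵥ x) atTop (𝓝 0)) : x = 0 :=
  rigidity (fun t y hy => Epos_exp_mem t hy) (fun y hy => Epos_decay hy) hx hto

lemma Eneg_rigidity {M : Matrix (Fin d) (Fin d) ℂ} {x : Fin d → ℂ} (hx : x ∈ Eneg M)
    (hto : Tendsto (fun t : ℝ => exp (t • M) *ᵥ x) atBot (𝓝 0)) : x = 0 := by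
  have hx' : x ∈ Epos (-M) := by rw [Epos, neg_neg]; exact hx
  refine Epos_rigidity hx' ?_
  have h := hto.comp tendsto_neg_atTop_atBot
  refine h.congr fun t => ?_
  show exp ((-t) • M) *ᵥ x = _
  rw [← smul_neg']

lemma top_le_Eneg_sup_Epos {M : Matrix (Fin d) (Fin d) ℂ}
    (hM : ∀ μ : ℂ, Module.End.HasEigenvalue (Matrix.toLin' M) μ → μ.re ≠ 0) :
    (⊤ : Submodule ℂ (Fin d → ℂ)) ≤ Eneg M ⊔ Epos M := by
  rw [← Module.End.iSup_maxGenEigenspace_eq_top (Matrix.toLin' M)]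
  refine iSup_le fun μ => ?_
  rcases lt_trichotomy μ.re 0 with hlt | heq | hgt
  · exact le_trans (le_iSup (fun ν : {ν : ℂ // ν.re < 0} => genSp M ν.1) ⟨μ, hlt⟩) le_sup_left
  · have hbot : Module.End.maxGenEigenspace (Matrix.toLin' M) μ = ⊥ := by
      by_contra hne
      rw [Module.End.maxGenEigenspace_eq] at hne
      exact hM μ (Module.End.hasEigenvalue_of_hasGenEigenvalue hne) heq
    rw [hbot]
    exact bot_le
  · refine le_trans ?_ le_sup_right
    have h : Module.End.maxGenEigenspace (Matrix.toLin' M) μ = genSp (-M) (-μ) := by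
      rw [genSp_neg]
      rfl
    rw [h]
    exact le_iSup (fun ν : {ν : ℂ // ν.re < 0} => genSp (-M) ν.1)
      ⟨-μ, by simpa using hgt⟩

/-- complexification of a real vector -/
def cm (v : Fin d → ℝ) : Fin d → ℂ := fun i => (v i : ℂ)

lemma cm_add (u v : Fin d → ℝ) : cm (u + v) = cm u + cm v := by
  funext i; simp [cm]

lemma cm_inj {u v : Fin d → ℝ} (h : cm u = cm v) : u = v := by
  funext i
  have := congrFun h i
  simpa [cm, Complex.ofReal_inj] using this

lemma exp_map (S : Matrix (Fin d) (Fin d) ℝ) :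
    exp (S.map Complex.ofReal) = (exp S).map Complex.ofReal := by
  have hcont : Continuous (Complex.ofRealHom.mapMatrix :
      Matrix (Fin d) (Fin d) ℝ →+* Matrix (Fin d) (Fin d) ℂ) :=
    continuous_id.matrix_map Complex.continuous_ofReal
  have h := map_exp (Complex.ofRealHom.mapMatrix :
      Matrix (Fin d) (Fin d) ℝ →+* Matrix (Fin d) (Fin d) ℂ) hcont S
  have h2 : (exp : Matrix (Fin d) (Fin d) ℂ → _) = exp := rfl
  rw [← h2]
  exact h.symm

lemma mulVec_cm (X : Matrix (Fin d) (Fin d) ℝ) (v : Fin d → ℝ) :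
    (X.map Complex.ofReal) *ᵥ (cm v) = cm (X *ᵥ v) := by
  funext i
  simp [Matrix.mulVec, dotProduct, cm]

lemma smul_map (t : ℝ) (S : Matrix (Fin d) (Fin d) ℝ) :
    t • (S.map Complex.ofReal) = (t • S).map Complex.ofReal := by
  ext i j
  simp [Complex.real_smul]

lemma exp_traj_eq (S : Matrix (Fin d) (Fin d) ℝ) (v : Fin d → ℝ) (t : ℝ) :
    exp (t • (S.map Complex.ofReal)) *ᵥ (cm v) = cm (exp (t • S) *ᵥ v) := by
  rw [smul_map, exp_map, mulVec_cm]

lemma tendsto_cm_iff {S : Matrix (Fin d) (Fin d) ℝ} {v : Fin d → ℝ} {l : Filter ℝ} :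
    Tendsto (fun t : ℝ => exp (t • S) *ᵥ v) l (𝓝 0) ↔
    Tendsto (fun t : ℝ => exp (t • (S.map Complex.ofReal)) *ᵥ (cm v)) l (𝓝 0) := by
  have hc0 : cm (d := d) 0 = 0 := by funext i; simp [cm]
  constructor
  · intro h
    have hcont : Continuous (cm (d := d)) :=
      continuous_pi fun i => Complex.continuous_ofReal.comp (continuous_apply i)
    have h2 : Tendsto (fun t => cm (exp (t • S) *ᵥ v)) l (𝓝 (cm 0)) :=
      (hcont.tendsto 0).comp h
    rw [hc0] at h2
    exact h2.congr fun t => (exp_traj_eq S v t).symm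
  · intro h
    have hre : Continuous (fun (w : Fin d → ℂ) => fun i => (w i).re) :=
      continuous_pi fun i => Complex.continuous_re.comp (continuous_apply i)
    have h2 := (hre.tendsto 0).comp h
    have h0 : (fun i => ((0 : Fin d → ℂ) i).re) = (0 : Fin d → ℝ) := by funext i; simp
    rw [show (𝓝 (fun i => ((0 : Fin d → ℂ) i).re)) = 𝓝 (0 : Fin d → ℝ) from by rw [h0]] at h2
    refine h2.congr fun t => ?_
    rw [Function.comp_apply, exp_traj_eq S v t]
    funext i
    simp [cm]

lemma exp_form (S : Matrix (Fin d) (Fin d) ℝ) (t : ℝ) :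
    exp (t • S.map Complex.ofReal) = (exp (t • S)).map Complex.ofReal := by
  rw [smul_map, exp_map]

lemma mulVec_conj (X : Matrix (Fin d) (Fin d) ℝ) (a : Fin d → ℂ) :
    (X.map Complex.ofReal) *ᵥ (fun i => (starRingEnd ℂ) (a i))
      = fun i => (starRingEnd ℂ) (((X.map Complex.ofReal) *ᵥ a) i) := by
  funext i
  simp [Matrix.mulVec, dotProduct, map_sum, Complex.conj_ofReal]

lemma re_traj {S : Matrix (Fin d) (Fin d) ℝ} {a : Fin d → ℂ} {l : Filter ℝ}
    (ha : Tendsto (fun t : ℝ => exp (t • S.map Complex.ofReal) *ᵥ a) l (𝓝 0)) :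
    Tendsto (fun t : ℝ => exp (t • S) *ᵥ (fun i => (a i).re)) l (𝓝 0) := by
  rw [tendsto_cm_iff]
  have hcm : cm (fun i => (a i).re) = (2⁻¹ : ℂ) • (a + fun i => (starRingEnd ℂ) (a i)) := by
    funext i
    show ((a i).re : ℂ) = 2⁻¹ * (a i + (starRingEnd ℂ) (a i))
    rw [Complex.add_conj]
    push_cast
    ring
  have hkey : ∀ t : ℝ, exp (t • S.map Complex.ofReal) *ᵥ cm (fun i => (a i).re)
      = (2⁻¹ : ℂ) • (exp (t • S.map Complex.ofReal) *ᵥ a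
          + fun i => (starRingEnd ℂ) ((exp (t • S.map Complex.ofReal) *ᵥ a) i)) := by
    intro t
    rw [hcm, Matrix.mulVec_smul, Matrix.mulVec_add]
    congr 1
    rw [exp_form, mulVec_conj]
  have hconj : Continuous (fun (w : Fin d → ℂ) => fun i => (starRingEnd ℂ) (w i)) :=
    continuous_pi fun i => Complex.continuous_conj.comp (continuous_apply i)
  have h2 : Tendsto (fun t : ℝ => (fun i => (starRingEnd ℂ)
      ((exp (t • S.map Complex.ofReal) *ᵥ a) i))) l (𝓝 0) := by
    have := (hconj.tendsto 0).comp ha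
    have h0 : (fun i => (starRingEnd ℂ) ((0 : Fin d → ℂ) i)) = (0 : Fin d → ℂ) := by
      funext i; simp
    rw [show (𝓝 (fun i => (starRingEnd ℂ) ((0 : Fin d → ℂ) i))) = 𝓝 (0 : Fin d → ℂ) from
      by rw [h0]] at this
    exact this
  have h3 := ((ha.add h2).const_smul (2⁻¹ : ℂ))
  rw [add_zero, smul_zero] at h3
  exact (tendsto_congr hkey).mpr h3

section real

variable (S : Matrix (Fin d) (Fin d) ℝ)

lemma negSpace_sup_posSpace (hHyp : IsHyperbolic S) :
    negSpace d S ⊔ posSpace d S = ⊤ := by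
  rw [eq_top_iff]
  intro v _
  obtain ⟨a, ha, b, hb, hab⟩ := Submodule.mem_sup.mp
    (top_le_Eneg_sup_Epos (M := S.map Complex.ofReal) hHyp (Submodule.mem_top (x := cm v)))
  have hra : (fun i => (a i).re) ∈ negSpace d S := re_traj (Eneg_decay ha)
  have hrb : (fun i => (b i).re) ∈ posSpace d S := re_traj (Epos_decay hb)
  have hv : v = (fun i => (a i).re) + (fun i => (b i).re) := by
    funext i
    have := congrFun hab i
    have h2 : (a i + b i).re = v i := by
      rw [show a i + b i = cm v i from this]; simp [cm]
    simpa using h2.symm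
  rw [hv]
  exact Submodule.add_mem_sup hra hrb

lemma negSpace_inf_posSpace (hHyp : IsHyperbolic S) :
    negSpace d S ⊓ posSpace d S = ⊥ := by
  rw [eq_bot_iff]
  rintro v ⟨hv1, hv2⟩
  have hc1 : Tendsto (fun t : ℝ => exp (t • S.map Complex.ofReal) *ᵥ cm v) atTop (𝓝 0) :=
    tendsto_cm_iff.mp hv1
  have hc2 : Tendsto (fun t : ℝ => exp (t • S.map Complex.ofReal) *ᵥ cm v) atBot (𝓝 0) :=
    tendsto_cm_iff.mp hv2
  obtain ⟨a, ha, b, hb, hab⟩ := Submodule.mem_sup.mp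
    (top_le_Eneg_sup_Epos (M := S.map Complex.ofReal) hHyp (Submodule.mem_top (x := cm v)))
  have hbtraj : Tendsto (fun t : ℝ => exp (t • S.map Complex.ofReal) *ᵥ b) atTop (𝓝 0) := by
    have := hc1.sub (Eneg_decay ha)
    rw [sub_zero] at this
    refine this.congr fun t => ?_
    rw [← hab, Matrix.mulVec_add]
    abel
  have hb0 : b = 0 := Epos_rigidity hb hbtraj
  have ha0 : a = 0 := by
    refine Eneg_rigidity ha ?_
    have hav : a = cm v := by rw [← hab, hb0, add_zero]
    rw [hav]
    exact hc2
  have : cm v = 0 := by rw [← hab, ha0, hb0, add_zero]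
  have hv0 : v = 0 := by
    apply cm_inj
    rw [this]
    funext i; simp [cm]
  simp [hv0]

end real



section sympl

lemma J_mul_J (n : ℕ) : Jmat n * Jmat n = -1 := by
  rw [Jmat, Matrix.reindex_apply, Matrix.submatrix_mul_equiv, Matrix.fromBlocks_multiply]
  have h : (Matrix.fromBlocks (0 * 0 + -1 * 1) (0 * -1 + -1 * 0) (1 * 0 + 0 * 1) (1 * -1 + 0 * 0)
      : Matrix (Fin n ⊕ Fin n) (Fin n ⊕ Fin n) ℝ)
      = -(1 : Matrix (Fin n ⊕ Fin n) (Fin n ⊕ Fin n) ℝ) := by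
    rw [← Matrix.fromBlocks_one (l := Fin n) (m := Fin n) (α := ℝ), Matrix.fromBlocks_neg]
    congr 1 <;> simp
  rw [h]
  ext i j
  simp [Matrix.submatrix_apply, Matrix.neg_apply, Matrix.one_apply,
    EmbeddingLike.apply_eq_iff_eq, Fin.ext_iff]

lemma Jmat_transpose (n : ℕ) : (Jmat n)ᵀ = -(Jmat n) := by
  rw [Jmat, Matrix.reindex_apply, Matrix.transpose_submatrix, Matrix.fromBlocks_transpose]
  have h : (Matrix.fromBlocks (0 : Matrix (Fin n) (Fin n) ℝ)ᵀ (1 : Matrix (Fin n) (Fin n) ℝ)ᵀ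
      (-1 : Matrix (Fin n) (Fin n) ℝ)ᵀ (0 : Matrix (Fin n) (Fin n) ℝ)ᵀ)
      = -(Matrix.fromBlocks (0 : Matrix (Fin n) (Fin n) ℝ) (-1) 1 0) := by
    rw [Matrix.fromBlocks_neg]
    congr 1 <;> simp
  rw [h]
  ext i j
  simp [Matrix.submatrix_apply, Matrix.neg_apply]

lemma J_mul_negJ (n : ℕ) : Jmat n * (-(Jmat n)) = 1 := by
  rw [mul_neg, J_mul_J, neg_neg]

lemma negJ_mul_J (n : ℕ) : (-(Jmat n)) * Jmat n = 1 := by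
  rw [neg_mul, J_mul_J, neg_neg]

variable {n : ℕ}

/-- `J` as a unit. -/
noncomputable def Junit (n : ℕ) : (Matrix (Fin (2*n)) (Fin (2*n)) ℝ)ˣ :=
  ⟨Jmat n, -(Jmat n), J_mul_negJ n, negJ_mul_J n⟩

lemma exp_transpose_mul_J (S : Matrix (Fin (2*n)) (Fin (2*n)) ℝ)
    (hHam : Sᵀ * Jmat n + Jmat n * S = 0) (t : ℝ) :
    (exp (t • S))ᵀ * Jmat n = Jmat n * exp (-(t • S)) := by
  have hST : Sᵀ = (Junit n : Matrix _ _ ℝ) * (-S) * (↑(Junit n)⁻¹ : Matrix _ _ ℝ) := by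
    have h1 : Sᵀ * Jmat n = -(Jmat n * S) := eq_neg_of_add_eq_zero_left hHam
    show Sᵀ = Jmat n * (-S) * (-(Jmat n))
    calc Sᵀ = Sᵀ * (Jmat n * (-(Jmat n))) := by rw [J_mul_negJ, mul_one]
      _ = (Sᵀ * Jmat n) * (-(Jmat n)) := by rw [mul_assoc]
      _ = (-(Jmat n * S)) * (-(Jmat n)) := by rw [h1]
      _ = Jmat n * (-S) * (-(Jmat n)) := by rw [show Jmat n * (-S) = -(Jmat n * S) from mul_neg _ _]
  have h2 : (exp (t • S))ᵀ = exp (t • Sᵀ) := by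
    rw [← Matrix.transpose_smul, Matrix.exp_transpose]
  have h3 : t • Sᵀ = (Junit n : Matrix _ _ ℝ) * (-(t • S)) * (↑(Junit n)⁻¹ : Matrix _ _ ℝ) := by
    rw [hST, ← smul_neg, mul_smul_comm, smul_mul_assoc]
  rw [h2, h3, Matrix.exp_units_conj]
  show Jmat n * exp (-(t • S)) * (-(Jmat n)) * Jmat n = _
  rw [mul_assoc (Jmat n * exp (-(t • S))), negJ_mul_J, mul_one]

lemma dot_aux (A : Matrix (Fin (2*n)) (Fin (2*n)) ℝ) (x y : Fin (2*n) → ℝ) :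
    (A *ᵥ x) ⬝ᵥ y = x ⬝ᵥ (Aᵀ *ᵥ y) := by
  rw [dotProduct_mulVec, Matrix.vecMul_transpose]

lemma symplForm_exp_invariant (S : Matrix (Fin (2*n)) (Fin (2*n)) ℝ)
    (hHam : Sᵀ * Jmat n + Jmat n * S = 0) (t : ℝ) (u v : Fin (2*n) → ℝ) :
    symplForm n (exp (t • S) *ᵥ u) (exp (t • S) *ᵥ v) = symplForm n u v := by
  set E := exp (t • S) with hE
  have hEJE : Eᵀ * Jmat n * E = Jmat n := by
    rw [exp_transpose_mul_J S hHam t, mul_assoc, ← Matrix.exp_add_of_commute]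
    · rw [neg_add_cancel, exp_zero, mul_one]
    · exact (Commute.refl (t • S)).neg_left
  have hmat : (Jmat n * E)ᵀ * E = (Jmat n)ᵀ := by
    calc (Jmat n * E)ᵀ * E = Eᵀ * (Jmat n)ᵀ * E := by rw [Matrix.transpose_mul]
      _ = Eᵀ * (-(Jmat n)) * E := by rw [Jmat_transpose]
      _ = -(Eᵀ * Jmat n * E) := by rw [mul_neg, neg_mul]
      _ = -(Jmat n) := by rw [hEJE]
      _ = (Jmat n)ᵀ := (Jmat_transpose n).symm
  unfold symplForm
  rw [Matrix.mulVec_mulVec, dot_aux, Matrix.mulVec_mulVec, hmat, dot_aux]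

lemma isotropic_of_decay (S : Matrix (Fin (2*n)) (Fin (2*n)) ℝ)
    (hHam : Sᵀ * Jmat n + Jmat n * S = 0) {l : Filter ℝ} [l.NeBot]
    {u v : Fin (2*n) → ℝ}
    (hu : Tendsto (fun t : ℝ => exp (t • S) *ᵥ u) l (𝓝 0))
    (hv : Tendsto (fun t : ℝ => exp (t • S) *ᵥ v) l (𝓝 0)) :
    symplForm n u v = 0 := by
  have hJu : Tendsto (fun t : ℝ => Jmat n *ᵥ (exp (t • S) *ᵥ u)) l (𝓝 0) := by
    have hc : Continuous ((Matrix.mulVecLin (Jmat n)) :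
        (Fin (2*n) → ℝ) →ₗ[ℝ] (Fin (2*n) → ℝ)) :=
      LinearMap.continuous_of_finiteDimensional _
    have h2 := (hc.tendsto 0).comp hu
    rw [map_zero] at h2
    exact h2
  have hlim : Tendsto (fun t : ℝ =>
      symplForm n (exp (t • S) *ᵥ u) (exp (t • S) *ᵥ v)) l (𝓝 0) := by
    have h := tendsto_finset_sum (Finset.univ : Finset (Fin (2*n)))
      (fun i (_ : i ∈ Finset.univ) =>
        (((continuous_apply i).tendsto 0).comp hJu).mul
          (((continuous_apply i).tendsto 0).comp hv))
    simpa [symplForm, dotProduct] using h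
  have hconst : Tendsto (fun _ : ℝ => symplForm n u v) l (𝓝 0) := by
    refine hlim.congr fun t => ?_
    exact symplForm_exp_invariant S hHam t u v
  exact tendsto_nhds_unique tendsto_const_nhds hconst

lemma isotropic_finrank_le (E : Submodule ℝ (Fin (2*n) → ℝ))
    (hiso : ∀ u ∈ E, ∀ v ∈ E, symplForm n u v = 0) :
    Module.finrank ℝ E + Module.finrank ℝ E ≤ 2*n := by
  classical
  let eqv : (Fin (2*n) → ℝ) ≃ₗ[ℝ] EuclideanSpace ℝ (Fin (2*n)) :=
    (WithLp.linearEquiv 2 ℝ (Fin (2*n) → ℝ)).symm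
  let Jeq : (Fin (2*n) → ℝ) ≃ₗ[ℝ] (Fin (2*n) → ℝ) :=
    LinearEquiv.ofLinear (Matrix.mulVecLin (Jmat n)) (Matrix.mulVecLin (-(Jmat n)))
      (by rw [← Matrix.mulVecLin_mul, J_mul_negJ, Matrix.mulVecLin_one])
      (by rw [← Matrix.mulVecLin_mul, negJ_mul_J, Matrix.mulVecLin_one])
  let E' := E.map (eqv : (Fin (2*n) → ℝ) →ₗ[ℝ] EuclideanSpace ℝ (Fin (2*n)))
  let F := E.map ((Jeq.trans eqv : (Fin (2*n) → ℝ) ≃ₗ[ℝ] EuclideanSpace ℝ (Fin (2*n))) :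
    (Fin (2*n) → ℝ) →ₗ[ℝ] EuclideanSpace ℝ (Fin (2*n)))
  have hFle : F ≤ E'ᗮ := by
    rintro y ⟨f, hf, rfl⟩
    rw [Submodule.mem_orthogonal]
    rintro x ⟨e, he, rfl⟩
    show (inner ℝ (eqv e) ((Jeq.trans eqv) f) : ℝ) = 0
    have hin : (inner ℝ (eqv e) ((Jeq.trans eqv) f) : ℝ) = ∑ i, e i * (Jmat n *ᵥ f) i := by
      rw [PiLp.inner_apply]
      simp only [RCLike.inner_apply, conj_trivial]
      exact Finset.sum_congr rfl fun i _ => mul_comm _ _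
    have h2 := hiso f hf e he
    unfold symplForm dotProduct at h2
    rw [hin, ← h2]
    exact Finset.sum_congr rfl fun i _ => mul_comm _ _
  have h1 : Module.finrank ℝ F = Module.finrank ℝ E :=
    LinearEquiv.finrank_map_eq _ _
  have h2 : Module.finrank ℝ E' = Module.finrank ℝ E :=
    LinearEquiv.finrank_map_eq _ _
  have h3 : Module.finrank ℝ E' + Module.finrank ℝ E'ᗮ
      = Module.finrank ℝ (EuclideanSpace ℝ (Fin (2*n))) :=
    Submodule.finrank_add_finrank_orthogonal E'
  have h4 : Module.finrank ℝ (EuclideanSpace ℝ (Fin (2*n))) = 2*n := by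
    simp [finrank_euclideanSpace]
  have h5 : Module.finrank ℝ F ≤ Module.finrank ℝ E'ᗮ := Submodule.finrank_mono hFle
  omega

end sympl

/-- For a hyperbolic Hamiltonian matrix `S`, the unstable space `V⁺(S)` is a Lagrangian
subspace of `(ℝ^{2n}, ω)`, and `ℝ^{2n} = V⁻(S) ⊕ V⁺(S)`. -/
theorem stmt3 (n : ℕ) (S : Matrix (Fin (2*n)) (Fin (2*n)) ℝ)
    (hHam : Sᵀ * Jmat n + Jmat n * S = 0) (hHyp : IsHyperbolic S) :
    (∀ u ∈ posSpace (2*n) S, ∀ v ∈ posSpace (2*n) S, symplForm n u v = 0) ∧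
    Module.finrank ℝ (posSpace (2*n) S) = n ∧
    negSpace (2*n) S ⊓ posSpace (2*n) S = ⊥ ∧
    negSpace (2*n) S ⊔ posSpace (2*n) S = ⊤ := by
  have hiso_pos : ∀ u ∈ posSpace (2*n) S, ∀ v ∈ posSpace (2*n) S, symplForm n u v = 0 :=
    fun u hu v hv => isotropic_of_decay S hHam hu hv
  have hiso_neg : ∀ u ∈ negSpace (2*n) S, ∀ v ∈ negSpace (2*n) S, symplForm n u v = 0 :=
    fun u hu v hv => isotropic_of_decay S hHam hu hv
  have hinf := negSpace_inf_posSpace S hHyp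
  have hsup := negSpace_sup_posSpace S hHyp
  refine ⟨hiso_pos, ?_, hinf, hsup⟩
  have hsum : Module.finrank ℝ (negSpace (2*n) S) + Module.finrank ℝ (posSpace (2*n) S)
      = 2*n := by
    have h := Submodule.finrank_sup_add_finrank_inf_eq (negSpace (2*n) S) (posSpace (2*n) S)
    rw [hsup, hinf, finrank_top, finrank_bot, add_zero] at h
    rw [← h]
    simp [Module.finrank_fintype_fun_eq_card]
  have h1 := isotropic_finrank_le (negSpace (2*n) S) hiso_neg
  have h2 := isotropic_finrank_le (posSpace (2*n) S) hiso_pos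
  omega
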